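/- A metric space X satisfies dim_N X ≤ n if and only if there exists a constant c > 0 such that for every s > 0, X admits a covering of the form 𝓑 = 𝓑₀ ∪ … ∪ 𝓑ₙ by sets of diameter ≤ c·s, where each subfamily 𝓑ₖ has s-multiplicity at most 1 (any two distinct members of 𝓑ₖ are at distance > s). -/

import Mathlib

open Metric Set

/-- `X` has Nagata dimension at most `n` (witnessed by some constant `c > 0`):
for every `s > 0` there is a covering by sets of diameter `≤ c * s` such that every
set of diameter `≤ s` meets at most `n + 1` members of the covering. -/
def NagataProp (X : Type*) [MetricSpace X] (n : ℕ) : Prop :=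
  ∃ c : ℝ, 0 < c ∧ ∀ s : ℝ, 0 < s → ∃ 𝓑 : Set (Set X),
    (⋃₀ 𝓑 = univ) ∧
    (∀ B ∈ 𝓑, EMetric.diam B ≤ ENNReal.ofReal (c * s)) ∧
    (∀ E : Set X, EMetric.diam E ≤ ENNReal.ofReal s →
      ∃ T : Finset (Set X), T.card ≤ n + 1 ∧
        ∀ B ∈ 𝓑, (B ∩ E).Nonempty → B ∈ T)

/-- The Nagata (Assouad–Nagata) dimension of a metric space, as an element of `ℕ∞`. -/
noncomputable def nagataDim (X : Type*) [MetricSpace X] : ℕ∞ :=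
  sInf {k : ℕ∞ | ∃ n : ℕ, k = n ∧ NagataProp X n}

open scoped Classical

noncomputable def nagataPick {X : Type*} (S : Set (Set X)) : Set X :=
  if h : S.Nonempty then h.choose else ∅

lemma nagataPick_mem {X : Type*} {S : Set (Set X)} (h : S.Nonempty) : nagataPick S ∈ S := by
  rw [nagataPick, dif_pos h]; exact h.choose_spec

/-- The colored covering property. -/
def ColoredProp (X : Type*) [MetricSpace X] (n : ℕ) : Prop :=
  ∃ c : ℝ, 0 < c ∧ ∀ s : ℝ, 0 < s → ∃ 𝓑 : Fin (n + 1) → Set (Set X),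
    (⋃₀ (⋃ k, 𝓑 k) = univ) ∧
    (∀ k, ∀ B ∈ 𝓑 k, EMetric.diam B ≤ ENNReal.ofReal (c * s)) ∧
    (∀ k, ∀ B ∈ 𝓑 k, ∀ C ∈ 𝓑 k, B ≠ C → ∀ x ∈ B, ∀ y ∈ C, s < dist x y)

lemma colored_to_nagata {X : Type*} [MetricSpace X] {n : ℕ} (h : ColoredProp X n) :
    NagataProp X n := by
  classical
  obtain ⟨c, hc, H⟩ := h
  refine ⟨c, hc, fun s hs => ?_⟩
  obtain ⟨𝓑, hcov, hdiam, hsep⟩ := H s hs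
  refine ⟨⋃ k, 𝓑 k, hcov, ?_, ?_⟩
  · intro B hB
    obtain ⟨k, hk⟩ := mem_iUnion.1 hB
    exact hdiam k B hk
  · intro E hE
    -- at most one member per color meets E
    set g : Fin (n+1) → Set X := fun k => nagataPick {B | B ∈ 𝓑 k ∧ (B ∩ E).Nonempty}
    refine ⟨Finset.univ.image g, le_trans (Finset.card_image_le) (by simp), ?_⟩
    intro B hB ⟨x, hxB, hxE⟩
    obtain ⟨k, hk⟩ := mem_iUnion.1 hB
    have hne : ({B' | B' ∈ 𝓑 k ∧ (B' ∩ E).Nonempty} : Set (Set X)).Nonempty :=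
      ⟨B, hk, x, hxB, hxE⟩
    have hmem := nagataPick_mem hne
    obtain ⟨hgk, y, hyg, hyE⟩ := hmem
    have : g k = B := by
      by_contra hne'
      have := hsep k (g k) hgk B hk hne' y hyg x hxB
      have hd : dist y x ≤ s := by
        have h1 : edist y x ≤ ENNReal.ofReal s := le_trans (EMetric.edist_le_diam_of_mem hyE hxE) hE
        rw [edist_dist] at h1
        exact (ENNReal.ofReal_le_ofReal_iff hs.le).1 h1
      linarith
    rw [← this]
    exact Finset.mem_image_of_mem g (Finset.mem_univ k)

lemma nagata_to_colored {X : Type*} [MetricSpace X] {n : ℕ} (h : NagataProp X n) :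
    ColoredProp X n := by
  classical
  obtain ⟨c, hc, H⟩ := h
  refine ⟨c * (4*n+6) + 4*n + 3, by positivity, fun s hs => ?_⟩
  obtain ⟨𝓐, hcov, hdiam, hmul⟩ := H ((4*n+6)*s) (by positivity)
  -- radii
  set r : ℕ → ℝ := fun k => (2*(k:ℝ)+1)*s with hr
  have hrmono : ∀ ⦃k l : ℕ⦄, k ≤ l → r k ≤ r l := by
    intro k l hkl
    have : (k:ℝ) ≤ l := Nat.cast_le.2 hkl
    simp only [hr]
    nlinarith
  -- near families
  set S : X → ℕ → Set (Set X) := fun x k => {C | C ∈ 𝓐 ∧ ∃ z ∈ C, dist x z < r k} with hS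
  have hSmono : ∀ (x : X) ⦃k l : ℕ⦄, k ≤ l → S x k ⊆ S x l := by
    intro x k l hkl C ⟨hC, z, hz, hdz⟩
    exact ⟨hC, z, hz, lt_of_lt_of_le hdz (hrmono hkl)⟩
  have hS0 : ∀ x : X, (S x 0).Nonempty := by
    intro x
    have : x ∈ ⋃₀ 𝓐 := hcov ▸ mem_univ x
    obtain ⟨C, hC, hxC⟩ := this
    refine ⟨C, hC, x, hxC, ?_⟩
    simp [hr]; positivity
  -- finiteness via multiplicity
  have hT : ∀ x : X, ∃ T : Finset (Set X), T.card ≤ n + 1 ∧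
      ∀ k ≤ n+1, ∀ C ∈ S x k, C ∈ T := by
    intro x
    have hEdiam : EMetric.diam (Metric.ball x (r (n+1))) ≤ ENNReal.ofReal ((4*n+6)*s) := by
      rw [← Metric.emetric_ball]
      calc EMetric.diam (EMetric.ball x (ENNReal.ofReal (r (n+1))))
          ≤ 2 * ENNReal.ofReal (r (n+1)) := EMetric.diam_ball
        _ = ENNReal.ofReal (2 * r (n+1)) := by
            rw [ENNReal.ofReal_mul (by norm_num : (0:ℝ) ≤ 2), ENNReal.ofReal_ofNat]
        _ ≤ ENNReal.ofReal ((4*n+6)*s) := by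
            apply ENNReal.ofReal_le_ofReal
            simp only [hr]
            push_cast
            nlinarith [hs.le]
    obtain ⟨T, hTcard, hTmem⟩ := hmul (Metric.ball x (r (n+1))) hEdiam
    refine ⟨T, hTcard, fun k hk C hCk => ?_⟩
    obtain ⟨hC𝓐, z, hz, hdz⟩ := hCk
    exact hTmem C hC𝓐 ⟨z, hz, by
      rw [Metric.mem_ball, dist_comm]
      exact lt_of_lt_of_le hdz (hrmono hk)⟩
  -- pigeonhole: a stable radius
  have hstable : ∀ x : X, ∃ k ≤ n, S x (k+1) ⊆ S x k := by
    intro x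
    by_contra hcon
    push_neg at hcon
    obtain ⟨T, hTcard, hTmem⟩ := hT x
    have key : ∀ k ≤ n+1, ∃ F : Finset (Set X), ↑F ⊆ S x k ∧ k + 1 ≤ F.card := by
      intro k hk
      induction k with
      | zero =>
        obtain ⟨C, hC⟩ := hS0 x
        exact ⟨{C}, by simpa using hC, by simp⟩
      | succ m ih =>
        obtain ⟨F, hFsub, hFcard⟩ := ih (by omega)
        obtain ⟨D, hD1, hD2⟩ : ∃ D, D ∈ S x (m+1) ∧ D ∉ S x m :=
          Set.not_subset.1 (hcon m (by omega))
        refine ⟨insert D F, ?_, ?_⟩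
        · intro C hC
          rcases Finset.mem_insert.1 (by exact_mod_cast hC) with h | h
          · exact h ▸ hD1
          · exact hSmono x (Nat.le_succ m) (hFsub h)
        · rw [Finset.card_insert_of_notMem (fun hDF => hD2 (hFsub hDF))]
          omega
    obtain ⟨F, hFsub, hFcard⟩ := key (n+1) le_rfl
    have hFT : F ⊆ T := fun C hC => hTmem (n+1) le_rfl C (hFsub hC)
    have := Finset.card_le_card hFT
    omega
  choose κ hκn hκ using hstable
  -- the chosen member
  set φ : X → Set X := fun x => nagataPick (S x (κ x)) with hφdef
  have hφ : ∀ x, φ x ∈ S x (κ x) :=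
    fun x => nagataPick_mem ((hS0 x).mono (hSmono x (Nat.zero_le _)))
  -- key stability: close points of same color see the same families
  have hkey : ∀ x y : X, κ x = κ y → dist x y ≤ s → S x (κ x) ⊆ S y (κ y) := by
    intro x y hxy hd C ⟨hC, z, hz, hdz⟩
    apply hκ y
    refine ⟨hC, z, hz, ?_⟩
    have : dist y z ≤ dist y x + dist x z := dist_triangle y x z
    rw [dist_comm y x] at this
    rw [← hxy]
    have hrr : s + r (κ x) ≤ r (κ x + 1) := by
      simp only [hr]; push_cast; nlinarith
    linarith
  have hφeq : ∀ x y : X, κ x = κ y → dist x y ≤ s → φ x = φ y := by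
    intro x y hxy hd
    have h1 : S x (κ x) = S y (κ y) :=
      Set.Subset.antisymm (hkey x y hxy hd)
        (hkey y x hxy.symm (by rwa [dist_comm]))
    simp only [hφdef, h1]
  -- the colored covering
  refine ⟨fun k => {A | ∃ B ∈ 𝓐, A = {x | κ x = (k:ℕ) ∧ φ x = B}}, ?_, ?_, ?_⟩
  · -- covering
    apply Set.eq_univ_of_forall
    intro x
    refine ⟨{y | κ y = κ x ∧ φ y = φ x}, ?_, rfl, rfl⟩
    apply mem_iUnion.2
    refine ⟨⟨κ x, Nat.lt_succ_of_le (hκn x)⟩, φ x, (hφ x).1, rfl⟩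
  · -- diameters
    rintro k A ⟨B, hB𝓐, rfl⟩
    refine Metric.ediam_le_iff.2 ?_
    rintro x ⟨hκx, hφx⟩ y ⟨hκy, hφy⟩
    obtain ⟨-, z, hz, hdz⟩ := hφ x
    obtain ⟨-, w, hw, hdw⟩ := hφ y
    rw [hφx] at hz
    rw [hφy] at hw
    have h1 : edist x y ≤ edist x z + edist z w + edist w y := edist_triangle4 x z w y
    have h2 : edist z w ≤ ENNReal.ofReal (c * ((4*n+6)*s)) :=
      le_trans (EMetric.edist_le_diam_of_mem hz hw) (hdiam B hB𝓐)
    have hrk : r (κ x) ≤ (2*n+1)*s := by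
      have := hrmono (hκn x)
      simp only [hr] at this ⊢
      have hn : (κ x : ℝ) ≤ n := Nat.cast_le.2 (hκn x)
      nlinarith
    have hrk' : r (κ y) ≤ (2*n+1)*s := by
      have hn : (κ y : ℝ) ≤ n := Nat.cast_le.2 (hκn y)
      simp only [hr]
      nlinarith
    have h3 : edist x z ≤ ENNReal.ofReal ((2*n+1)*s) := by
      rw [edist_dist]
      exact ENNReal.ofReal_le_ofReal (le_trans hdz.le hrk)
    have h4 : edist w y ≤ ENNReal.ofReal ((2*n+1)*s) := by
      rw [edist_comm, edist_dist]
      exact ENNReal.ofReal_le_ofReal (le_trans hdw.le hrk')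
    calc edist x y ≤ edist x z + edist z w + edist w y := h1
      _ ≤ ENNReal.ofReal ((2*n+1)*s) + ENNReal.ofReal (c * ((4*n+6)*s))
            + ENNReal.ofReal ((2*n+1)*s) := by gcongr
      _ = ENNReal.ofReal ((2*n+1)*s + c * ((4*n+6)*s) + (2*n+1)*s) := by
          rw [← ENNReal.ofReal_add, ← ENNReal.ofReal_add] <;> positivity
      _ ≤ ENNReal.ofReal ((c * (4*n+6) + 4*n + 3) * s) := by
          apply ENNReal.ofReal_le_ofReal
          push_cast
          nlinarith
  · -- separation
    rintro k A ⟨B, hB𝓐, rfl⟩ A' ⟨C, hC𝓐, rfl⟩ hne x ⟨hκx, hφx⟩ y ⟨hκy, hφy⟩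
    by_contra hd
    push_neg at hd
    have : φ x = φ y := hφeq x y (hκx.trans hκy.symm) hd
    rw [hφx, hφy] at this
    exact hne (this ▸ rfl)

theorem nagataDim_le_iff_colored_covering {X : Type*} [MetricSpace X] (n : ℕ) :
    nagataDim X ≤ n ↔
      ∃ c : ℝ, 0 < c ∧ ∀ s : ℝ, 0 < s → ∃ 𝓑 : Fin (n + 1) → Set (Set X),
        (⋃₀ (⋃ k, 𝓑 k) = univ) ∧
        (∀ k, ∀ B ∈ 𝓑 k, EMetric.diam B ≤ ENNReal.ofReal (c * s)) ∧
        (∀ k, ∀ B ∈ 𝓑 k, ∀ C ∈ 𝓑 k, B ≠ C → ∀ x ∈ B, ∀ y ∈ C, s < dist x y) := by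
  constructor
  · intro hle
    -- extract m ≤ n with NagataProp X m
    have hmem : ∃ m : ℕ, (m : ℕ∞) ≤ n ∧ NagataProp X m := by
      by_contra hcon
      push_neg at hcon
      have h1 : (n : ℕ∞) + 1 ≤ nagataDim X := by
        apply le_sInf
        rintro k ⟨m, rfl, hm⟩
        exact Order.add_one_le_of_lt (lt_of_not_ge (fun hle' => (hcon m hle') hm))
      have h2 : (n : ℕ∞) < (n : ℕ∞) + 1 :=
        (ENat.lt_add_one_iff (ENat.coe_ne_top n)).2 le_rfl
      exact absurd (le_trans h1 hle) (not_le.2 h2)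
    obtain ⟨m, hmn, hm⟩ := hmem
    have hmn' : m ≤ n := by exact_mod_cast hmn
    -- weaken NagataProp X m to NagataProp X n
    have hn : NagataProp X n := by
      obtain ⟨c, hc, H⟩ := hm
      refine ⟨c, hc, fun s hs => ?_⟩
      obtain ⟨𝓑, h1, h2, h3⟩ := H s hs
      refine ⟨𝓑, h1, h2, fun E hE => ?_⟩
      obtain ⟨T, hT1, hT2⟩ := h3 E hE
      exact ⟨T, le_trans hT1 (by omega), hT2⟩
    exact nagata_to_colored hn
  · intro h
    have hn : NagataProp X n := colored_to_nagata h
    exact sInf_le ⟨n, rfl, hn⟩
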